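/- arXiv:2602.17401 — 2 statements merged into one kernel-verified Lean document; each statement's English description precedes it below -/
import Mathlib

section
/- Let t, n ≥ 1 be integers, N = tn, and let B be an n×n 0-1 matrix with |B| ones. Then the number of N×N permutation matrices A whose support is contained in the union of the blocks I_a × I_b over pairs (a,b) with B_{a,b} = 1 is at most (t!)^n · (|B|/n)^N. -/
open Filter

noncomputable section

/-- An `n × n` 0-1 matrix `A` contains the `k × k` pattern `P` if there are strictly
increasing rows and columns selecting a submatrix that dominates `P`. -/
def Contains {k n : ℕ} (P : Matrix (Fin k) (Fin k) Bool)
    (A : Matrix (Fin n) (Fin n) Bool) : Prop :=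
  ∃ r : Fin k → Fin n, ∃ c : Fin k → Fin n,
    StrictMono r ∧ StrictMono c ∧ ∀ i j, P i j = true → A (r i) (c j) = true

/-- `A` avoids the pattern `P`. -/
def Avoids {k n : ℕ} (P : Matrix (Fin k) (Fin k) Bool)
    (A : Matrix (Fin n) (Fin n) Bool) : Prop := ¬ Contains P A

/-- The permutation matrix of a permutation. -/
def permMatrix {n : ℕ} (σ : Equiv.Perm (Fin n)) : Matrix (Fin n) (Fin n) Bool :=
  fun i j => decide (σ i = j)

/-- `A` is a permutation matrix. -/
def IsPermMatrix {n : ℕ} (A : Matrix (Fin n) (Fin n) Bool) : Prop :=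
  ∃ σ : Equiv.Perm (Fin n), A = permMatrix σ

/-- Number of ones of a 0-1 matrix. -/
def numOnes {m n : ℕ} (A : Matrix (Fin m) (Fin n) Bool) : ℕ :=
  (Finset.univ.filter fun p : Fin m × Fin n => A p.1 p.2 = true).card

/-- `SW P n = S_P(n)`, the number of `n × n` permutation matrices avoiding `P`. -/
def SW {k : ℕ} (P : Matrix (Fin k) (Fin k) Bool) (n : ℕ) : ℕ :=
  Nat.card {A : Matrix (Fin n) (Fin n) Bool // IsPermMatrix A ∧ Avoids P A}

/-- `exFH P n = ex(n, P)`, the maximum number of ones in an `n × n` 0-1 matrix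
avoiding `P`. -/
def exFH {k : ℕ} (P : Matrix (Fin k) (Fin k) Bool) (n : ℕ) : ℕ :=
  sSup {m : ℕ | ∃ A : Matrix (Fin n) (Fin n) Bool, Avoids P A ∧ numOnes A = m}

/-- `F c = inf over positive integers t of (t!)^(1/t) * 15^(c/t) / c`. -/
def F (c : ℝ) : ℝ :=
  ⨅ t : ℕ+, ((t : ℕ).factorial : ℝ) ^ ((1 : ℝ) / (t : ℕ)) * (15 : ℝ) ^ (c / (t : ℕ)) / c

/-- The block (among `n` consecutive blocks of length `t`) containing a given
index of `Fin (t * n)`. -/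
def blockOf {t n : ℕ} (ht : 0 < t) (i : Fin (t * n)) : Fin n :=
  ⟨(i : ℕ) / t, by
    rw [Nat.div_lt_iff_lt_mul ht]
    exact lt_of_lt_of_le i.isLt (le_of_eq (mul_comm t n))⟩

open Classical in
/-- The `t`-contraction of an `(t*n) × (t*n)` 0-1 matrix: entry `(a,b)` is 1 iff
the block `I_a × I_b` contains a one. -/
def contMat {t n : ℕ} (ht : 0 < t) (A : Matrix (Fin (t * n)) (Fin (t * n)) Bool) :
    Matrix (Fin n) (Fin n) Bool :=
  fun a b => decide (∃ i j, blockOf ht i = a ∧ blockOf ht j = b ∧ A i j = true)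

end

noncomputable section AuxProof

open Finset

variable {t n : ℕ}

def blkEquiv (ht : 0 < t) (n : ℕ) : Fin n × Fin t ≃ Fin (t * n) where
  toFun p := ⟨t * p.1 + p.2, by
    have h1 : (p.1 : ℕ) + 1 ≤ n := p.1.isLt
    have h2 : (p.2 : ℕ) < t := p.2.isLt
    calc t * (p.1:ℕ) + p.2 < t * ((p.1:ℕ) + 1) := by nlinarith
    _ ≤ t * n := Nat.mul_le_mul_left t h1⟩
  invFun i := (blockOf ht i, ⟨(i : ℕ) % t, Nat.mod_lt _ ht⟩)
  left_inv p := by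
    have h1 : (t * (p.1:ℕ) + p.2) / t = p.1 := by
      rw [Nat.mul_add_div ht, Nat.div_eq_of_lt p.2.isLt, Nat.add_zero]
    have h2 : (t * (p.1:ℕ) + p.2) % t = (p.2:ℕ) := by
      rw [Nat.mul_add_mod, Nat.mod_eq_of_lt p.2.isLt]
    ext
    · exact h1
    · exact h2
  right_inv i := by
    ext
    exact Nat.div_add_mod _ _

lemma blockOf_blkEquiv (ht : 0 < t) (p : Fin n × Fin t) :
    blockOf ht (blkEquiv ht n p) = p.1 := by
  ext
  show (t * (p.1:ℕ) + p.2) / t = p.1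
  rw [Nat.mul_add_div ht, Nat.div_eq_of_lt p.2.isLt, Nat.add_zero]

def fenum {α : Type*} (s : Finset α) {k : ℕ} (h : s.card = k) : Fin k ≃ s :=
  (finCongr h).symm.trans s.equivFin.symm

lemma fibcard (π : Equiv.Perm (Fin n × Fin t)) (b : Fin n) :
    (univ.filter fun p : Fin n × Fin t => (π p).1 = b).card = t := by
  rw [← Fintype.card_subtype]
  have e : {p : Fin n × Fin t // (π p).1 = b} ≃ Fin t :=
    { toFun := fun x => (π x.1).2
      invFun := fun r => ⟨π.symm (b, r), by simp⟩
      left_inv := fun x => by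
        have h : ((b, (π x.1).2) : Fin n × Fin t) = π x.1 := Prod.ext x.2.symm rfl
        apply Subtype.ext
        simp [h]
      right_inv := fun r => by simp }
  rw [Fintype.card_congr e, Fintype.card_fin]

/-- decode: reconstruct the permutation (as a function) from the encoded data. -/
def decode (g : Fin n × Fin t → Fin n) (q : Fin n → Equiv.Perm (Fin t))
    (p : Fin n × Fin t) : Fin n × Fin t :=
  if h : (univ.filter fun p' => g p' = g p).card = t ∧
      p ∈ (univ.filter fun p' => g p' = g p) then
    (g p, q (g p) ((fenum (univ.filter fun p' => g p' = g p) h.1).symm ⟨p, h.2⟩))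
  else p

lemma encode_bij (π : Equiv.Perm (Fin n × Fin t)) (b : Fin n) :
    Function.Bijective (fun k : Fin t =>
      (π ((fenum (univ.filter fun p : Fin n × Fin t => (π p).1 = b)
        (fibcard π b)) k : Fin n × Fin t)).2) := by
  rw [← Finite.injective_iff_bijective]
  intro k k' hkk
  set s := univ.filter fun p : Fin n × Fin t => (π p).1 = b with hs
  set e := fenum s (fibcard π b) with he
  have m1 : (π ((e k : Fin n × Fin t))).1 = b := (mem_filter.mp (e k).2).2
  have m2 : (π ((e k' : Fin n × Fin t))).1 = b := (mem_filter.mp (e k').2).2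
  have hp : π ((e k : Fin n × Fin t)) = π ((e k' : Fin n × Fin t)) :=
    Prod.ext (m1.trans m2.symm) hkk
  have := π.injective hp
  exact e.injective (Subtype.ext this)

/-- encode a permutation. -/
def encode (π : Equiv.Perm (Fin n × Fin t)) :
    (Fin n × Fin t → Fin n) × (Fin n → Equiv.Perm (Fin t)) :=
  ⟨fun p => (π p).1, fun b => Equiv.ofBijective _ (encode_bij π b)⟩

lemma decode_encode (π : Equiv.Perm (Fin n × Fin t)) (p : Fin n × Fin t) :
    decode (encode π).1 (encode π).2 p = π p := by
  set b := (π p).1 with hb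
  have hgp : (encode π).1 p = b := rfl
  have hset : (univ.filter fun p' => (encode π).1 p' = (encode π).1 p)
      = (univ.filter fun p' : Fin n × Fin t => (π p').1 = b) := rfl
  have hc : (univ.filter fun p' => (encode π).1 p' = (encode π).1 p).card = t := by
    rw [hset]; exact fibcard π b
  have hm : p ∈ (univ.filter fun p' => (encode π).1 p' = (encode π).1 p) := by
    exact Finset.mem_filter.mpr ⟨Finset.mem_univ _, rfl⟩
  rw [decode, dif_pos ⟨hc, hm⟩]
  set s := univ.filter fun p' : Fin n × Fin t => (π p').1 = b with hs
  set e := fenum s (fibcard π b) with he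
  have key : ((encode π).2 b) (e.symm ⟨p, by exact hm⟩)
      = (π p).2 := by
    show (π ((e (e.symm ⟨p, _⟩) : Fin n × Fin t))).2 = (π p).2
    rw [Equiv.apply_symm_apply]
  refine Prod.ext rfl ?_
  show ((encode π).2 ((encode π).1 p)) ((fenum (univ.filter fun p' => (encode π).1 p' = (encode π).1 p) hc).symm ⟨p, hm⟩) = (π p).2
  exact key

lemma encode_injective : Function.Injective (encode (t := t) (n := n)) := by
  intro π π' h
  apply Equiv.ext
  intro p
  rw [← decode_encode π p, ← decode_encode π' p, h]

end AuxProof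

noncomputable section Aux2

open Finset

variable {t n : ℕ}

def rowc (B : Matrix (Fin n) (Fin n) Bool) (a : Fin n) : ℕ :=
  (univ.filter fun b => B a b = true).card

lemma numOnes_eq (B : Matrix (Fin n) (Fin n) Bool) : numOnes B = ∑ a, rowc B a := by
  rw [numOnes, Finset.card_filter, Fintype.sum_prod_type]
  simp only [rowc, Finset.card_filter]

lemma card_tgt (B : Matrix (Fin n) (Fin n) Bool) :
    Nat.card ({g : Fin n × Fin t → Fin n // ∀ p, B p.1 (g p) = true}
        × (Fin n → Equiv.Perm (Fin t)))
      = (∏ a, rowc B a ^ t) * t.factorial ^ n := by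
  rw [Nat.card_prod]
  congr 1
  · rw [Nat.card_eq_fintype_card, Fintype.card_congr (Equiv.subtypePiEquivPi
      (p := fun (p : Fin n × Fin t) (b : Fin n) => B p.1 b = true)),
      Fintype.card_pi]
    have h1 : ∀ p : Fin n × Fin t, Fintype.card {b // B p.1 b = true} = rowc B p.1 :=
      fun p => Fintype.card_subtype _
    calc ∏ p : Fin n × Fin t, Fintype.card {b // B p.1 b = true}
        = ∏ p : Fin n × Fin t, rowc B p.1 := by simp [h1]
      _ = ∏ a, ∏ _r : Fin t, rowc B a := Fintype.prod_prod_type _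
      _ = ∏ a, rowc B a ^ t := by simp [Finset.prod_const]
  · rw [Nat.card_eq_fintype_card, Fintype.card_fun, Fintype.card_perm, Fintype.card_fin,
      Fintype.card_fin]

lemma card_le_aux (ht : 0 < t) (B : Matrix (Fin n) (Fin n) Bool) :
    Nat.card {A : Matrix (Fin (t * n)) (Fin (t * n)) Bool //
        IsPermMatrix A ∧ ∀ i j, A i j = true → B (blockOf ht i) (blockOf ht j) = true}
      ≤ (∏ a, rowc B a ^ t) * t.factorial ^ n := by
  rw [← card_tgt B]
  set E := blkEquiv ht n with hE
  have hcond : ∀ (A : {A : Matrix (Fin (t * n)) (Fin (t * n)) Bool //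
      IsPermMatrix A ∧ ∀ i j, A i j = true → B (blockOf ht i) (blockOf ht j) = true})
      (p : Fin n × Fin t),
      B p.1 ((encode (E.symm.permCongr A.2.1.choose)).1 p) = true := by
    intro A p
    have hspec := A.2.1.choose_spec
    set σ := A.2.1.choose with hσ
    have h1 : (encode (E.symm.permCongr σ)).1 p = blockOf ht (σ (E p)) := by
      simp [encode, Equiv.permCongr_apply]
      rfl
    rw [h1, ← blockOf_blkEquiv ht p]
    exact A.2.2 (E p) (σ (E p)) (by rw [hspec]; simp [permMatrix])
  apply Nat.card_le_card_of_injective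
    (fun A => (⟨(encode (E.symm.permCongr A.2.1.choose)).1, hcond A⟩,
      (encode (E.symm.permCongr A.2.1.choose)).2))
  intro A A' h
  have h1 : encode (E.symm.permCongr A.2.1.choose)
      = encode (E.symm.permCongr A'.2.1.choose) := by
    have ha := congrArg Prod.fst h
    have hb := congrArg Prod.snd h
    exact Prod.ext (congrArg Subtype.val ha) hb
  have h4 : A.2.1.choose = A'.2.1.choose :=
    E.symm.permCongr.injective (encode_injective h1)
  apply Subtype.ext
  rw [A.2.1.choose_spec, A'.2.1.choose_spec, h4]

end Aux2

section Final

open Finset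

lemma amgm_aux {n : ℕ} (hn : 0 < n) (z : Fin n → ℝ) (hz : ∀ a, 0 ≤ z a) :
    ∏ a, z a ≤ ((∑ a, z a) / n) ^ n := by
  have hn' : (n : ℝ) ≠ 0 := Nat.cast_ne_zero.mpr hn.ne'
  have hw : ∑ _a : Fin n, (n : ℝ)⁻¹ = 1 := by
    simp [Finset.sum_const, Finset.card_univ, mul_comm]
    field_simp
  have amgm0 : ∏ a, z a ^ ((n : ℝ)⁻¹) ≤ ∑ a, (n : ℝ)⁻¹ * z a :=
    Real.geom_mean_le_arith_mean_weighted univ _ z (fun _ _ => by positivity) hw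
      (fun a _ => hz a)
  have hrhs : ∑ a, (n : ℝ)⁻¹ * z a = (∑ a, z a) / n := by
    rw [← Finset.mul_sum]
    ring
  rw [hrhs] at amgm0
  have h1 : ∀ a, ((z a) ^ ((n : ℝ)⁻¹)) ^ n = z a := by
    intro a
    rw [← Real.rpow_natCast (z a ^ ((n : ℝ)⁻¹)) n, ← Real.rpow_mul (hz a),
      inv_mul_cancel₀ hn', Real.rpow_one]
  have h2 : ∏ a, z a = (∏ a, z a ^ ((n : ℝ)⁻¹)) ^ n := by
    rw [← Finset.prod_pow]
    exact (Finset.prod_congr rfl fun a _ => (h1 a)).symm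
  rw [h2]
  exact pow_le_pow_left₀ (Finset.prod_nonneg fun a _ => Real.rpow_nonneg (hz a) _) amgm0 n

end Final

theorem lifts_card_le (t n : ℕ) (ht : 0 < t) (hn : 0 < n)
    (B : Matrix (Fin n) (Fin n) Bool) :
    (Nat.card {A : Matrix (Fin (t * n)) (Fin (t * n)) Bool //
        IsPermMatrix A ∧
          ∀ i j, A i j = true → B (blockOf ht i) (blockOf ht j) = true} : ℝ) ≤
      (t.factorial : ℝ) ^ n * ((numOnes B : ℝ) / n) ^ (t * n) := by
  have key := card_le_aux ht B
  have hcast : (Nat.card {A : Matrix (Fin (t * n)) (Fin (t * n)) Bool //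
      IsPermMatrix A ∧
        ∀ i j, A i j = true → B (blockOf ht i) (blockOf ht j) = true} : ℝ) ≤
      (∏ a, (rowc B a : ℝ) ^ t) * (t.factorial : ℝ) ^ n := by
    exact_mod_cast key
  refine hcast.trans ?_
  rw [mul_comm]
  apply mul_le_mul_of_nonneg_left ?_ (by positivity)
  have hz : ∀ a : Fin n, (0 : ℝ) ≤ (rowc B a : ℝ) := fun a => Nat.cast_nonneg _
  have hsum : (numOnes B : ℝ) = ∑ a, (rowc B a : ℝ) := by
    rw [numOnes_eq B]; push_cast; rfl
  have amgm := amgm_aux hn (fun a => (rowc B a : ℝ)) hz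
  have hprod_nonneg : (0 : ℝ) ≤ ∏ a, (rowc B a : ℝ) :=
    Finset.prod_nonneg fun a _ => hz a
  calc ∏ a, (rowc B a : ℝ) ^ t = (∏ a, (rowc B a : ℝ)) ^ t := by
        rw [Finset.prod_pow]
    _ ≤ (((∑ a, (rowc B a : ℝ)) / n) ^ n) ^ t := pow_le_pow_left₀ hprod_nonneg amgm t
    _ = ((numOnes B : ℝ) / n) ^ (t * n) := by
        rw [← pow_mul, hsum, mul_comm]
end

section
/- Let P be a permutation matrix and let t, n ≥ 1 be integers with N = tn. Then S_P(N) ≤ Σ_{B ∈ T_n(P)} |L_t(B)|, i.e., the number of N×N permutation matrices avoiding P is at most the sum, over all n×n 0-1 matrices B avoiding P, of the number of N×N permutation matrices whose support is contained in the union of the blocks I_a × I_b with B_{a,b} = 1. -/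
open Filter

lemma blockOf_lt_imp {t n : ℕ} (ht : 0 < t) {i j : Fin (t * n)}
    (h : blockOf ht i < blockOf ht j) : i < j := by
  by_contra hc
  push_neg at hc
  have : (j : ℕ) / t ≤ (i : ℕ) / t := Nat.div_le_div_right hc
  exact absurd h (by simpa [blockOf, Fin.lt_iff_val_lt_val] using Nat.not_lt.mpr this)

lemma contains_of_contMat {k t n : ℕ} (ht : 0 < t) {P : Matrix (Fin k) (Fin k) Bool}
    (hP : IsPermMatrix P) {A : Matrix (Fin (t * n)) (Fin (t * n)) Bool}
    (h : Contains P (contMat ht A)) : Contains P A := by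
  obtain ⟨σ, rfl⟩ := hP
  obtain ⟨r, c, hr, hc, hdom⟩ := h
  have key : ∀ i : Fin k, ∃ x y : Fin (t * n),
      blockOf ht x = r i ∧ blockOf ht y = c (σ i) ∧ A x y = true := by
    intro i
    have := hdom i (σ i) (by simp [permMatrix])
    simpa [contMat] using this
  choose x y hx hy hA using key
  refine ⟨x, fun j => y (σ.symm j), ?_, ?_, ?_⟩
  · intro i i' hii
    apply blockOf_lt_imp ht
    rw [hx, hx]
    exact hr hii
  · intro j j' hjj
    apply blockOf_lt_imp ht
    rw [hy, hy, Equiv.apply_symm_apply, Equiv.apply_symm_apply]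
    exact hc hjj
  · intro i j hPij
    have hij : σ i = j := by simpa [permMatrix] using hPij
    have h2 : σ.symm j = i := by rw [← hij, Equiv.symm_apply_apply]
    show A (x i) (y (σ.symm j)) = true
    rw [h2]
    exact hA i

open Classical in
theorem SW_le_sum_lifts {k : ℕ} (P : Matrix (Fin k) (Fin k) Bool)
    (hP : IsPermMatrix P) (t n : ℕ) (ht : 0 < t) (hn : 0 < n) :
    SW P (t * n) ≤
      ∑ B ∈ Finset.univ.filter (fun B : Matrix (Fin n) (Fin n) Bool => Avoids P B),
        Nat.card {A : Matrix (Fin (t * n)) (Fin (t * n)) Bool //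
          IsPermMatrix A ∧
            ∀ i j, A i j = true → B (blockOf ht i) (blockOf ht j) = true} := by
  classical
  have hcard : ∀ p : Matrix (Fin (t * n)) (Fin (t * n)) Bool → Prop,
      Nat.card {A // p A} = (Finset.univ.filter p).card := by
    intro p
    rw [Nat.card_eq_fintype_card, Fintype.card_subtype]
  rw [SW, hcard]
  have hsum : ∀ B ∈ Finset.univ.filter
      (fun B : Matrix (Fin n) (Fin n) Bool => Avoids P B),
      Nat.card {A : Matrix (Fin (t * n)) (Fin (t * n)) Bool //
          IsPermMatrix A ∧
            ∀ i j, A i j = true → B (blockOf ht i) (blockOf ht j) = true}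
        = (@Finset.filter _ (fun A : Matrix (Fin (t * n)) (Fin (t * n)) Bool =>
            IsPermMatrix A ∧
            ∀ i j, A i j = true → B (blockOf ht i) (blockOf ht j) = true)
            (fun _ => Classical.propDecidable _) Finset.univ).card := by
    intro B _
    exact hcard _
  rw [Finset.sum_congr rfl hsum]
  refine le_trans ?_ Finset.card_biUnion_le
  apply Finset.card_le_card
  intro A hA
  simp only [Finset.mem_filter, Finset.mem_univ, true_and] at hA
  obtain ⟨hperm, havoid⟩ := hA
  simp only [Finset.mem_biUnion, Finset.mem_filter, Finset.mem_univ, true_and]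
  refine ⟨contMat ht A, fun hcon => havoid (contains_of_contMat ht hP hcon),
    hperm, fun i j hij => ?_⟩
  simp only [contMat, decide_eq_true_eq]
  exact ⟨i, j, rfl, rfl, hij⟩
end
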